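/- The Gamlen–Gaudet collections B_I (defined by B_{[0,1)} = D_{m₀}, B_{I^±} = {K^± : K ∈ B_I}) satisfy Jones' compatibility condition with constant κ = 1; in particular, for all dyadic I₀ ⊂ I in D_{≤ n} and every K ∈ B_I, one has |K ∩ B_{I₀}|/|K| = |B_{I₀}|/|B_I|, where B_J = ⋃ B_J. -/

import Mathlib

open MeasureTheory

/-- The dyadic interval `[(j-1)/2^k, j/2^k)`, encoded by the pair `(k, j)`. -/
def dyadicSet (K : ℕ × ℕ) : Set ℝ := Set.Ico ((K.2 - 1 : ℝ) / 2 ^ K.1) ((K.2 : ℝ) / 2 ^ K.1)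

/-- The Gamlen–Gaudet collections: `B_{[0,1)} = D_{m₀}` (all dyadic intervals of length
`2^{-m₀}`) and, inductively, `B_{I^+} = {K^+ : K ∈ B_I}` and `B_{I^-} = {K^- : K ∈ B_I}`.
Here the dyadic interval `I = [(j-1)/2^k, j/2^k)` is encoded by `(k, j)`, its left half `I^+`
by `(k+1, 2j-1)` and its right half `I^-` by `(k+1, 2j)`; `GG m₀ k j` is the collection
`B_I` for `I = (k, j)`. -/
def GG (m₀ : ℕ) : ℕ → ℕ → Finset (ℕ × ℕ)
  | 0, _ => (Finset.Icc 1 (2 ^ m₀)).image fun l => (m₀, l)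
  | k + 1, j =>
      if j % 2 = 1 then (GG m₀ k ((j + 1) / 2)).image fun K => (K.1 + 1, 2 * K.2 - 1)
      else (GG m₀ k (j / 2)).image fun K => (K.1 + 1, 2 * K.2)

/-- `B_I := ⋃ B_I`, the union of the intervals in the Gamlen–Gaudet collection of
`I = (k, j)`. -/
def UB (m₀ k j : ℕ) : Set ℝ := ⋃ K ∈ GG m₀ k j, dyadicSet K

lemma GG_eq (m₀ : ℕ) : ∀ k j : ℕ, 1 ≤ j → j ≤ 2 ^ k →
    GG m₀ k j = (Finset.Icc 1 (2 ^ m₀)).image fun l => (m₀ + k, 2 ^ k * (l - 1) + j)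
  | 0, j, hj1, hj2 => by
    have : j = 1 := le_antisymm (by simpa using hj2) hj1
    subst this
    show (Finset.Icc 1 (2 ^ m₀)).image _ = _
    apply Finset.image_congr
    intro l hl
    simp only [Finset.mem_coe, Finset.mem_Icc] at hl
    simp [Nat.sub_add_cancel hl.1]
  | k + 1, j, hj1, hj2 => by
    rw [pow_succ] at hj2
    rcases Nat.even_or_odd j with he | ho
    · have he' : j % 2 = 0 := Nat.even_iff.mp he
      have hmod : j % 2 ≠ 1 := by omega
      have h2 : 2 * (j / 2) = j := by omega
      have hh1 : 1 ≤ j / 2 := by omega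
      have hh2 : j / 2 ≤ 2 ^ k := by omega
      show (if j % 2 = 1 then _ else _) = _
      rw [if_neg hmod, GG_eq m₀ k (j / 2) hh1 hh2, Finset.image_image]
      apply Finset.image_congr
      intro l hl
      simp only [Function.comp_apply, Prod.mk.injEq]
      constructor
      · omega
      · have he2 : 2 ^ (k + 1) * (l - 1) = 2 * (2 ^ k * (l - 1)) := by ring
        omega
    · have hmod : j % 2 = 1 := Nat.odd_iff.mp ho
      have h2 : 2 * ((j + 1) / 2) = j + 1 := by omega
      have hh1 : 1 ≤ (j + 1) / 2 := by omega
      have hh2 : (j + 1) / 2 ≤ 2 ^ k := by omega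
      show (if j % 2 = 1 then _ else _) = _
      rw [if_pos hmod, GG_eq m₀ k ((j + 1) / 2) hh1 hh2, Finset.image_image]
      apply Finset.image_congr
      intro l hl
      simp only [Function.comp_apply, Prod.mk.injEq]
      constructor
      · omega
      · have he2 : 2 ^ (k + 1) * (l - 1) = 2 * (2 ^ k * (l - 1)) := by ring
        omega

lemma vol_dyadic (a b : ℕ) : volume (dyadicSet (a, b)) = ENNReal.ofReal (((2 : ℝ) ^ a)⁻¹) := by
  rw [dyadicSet, Real.volume_Ico]
  congr 1
  have h : (0:ℝ) < 2 ^ a := by positivity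
  field_simp
  ring

lemma block_sub (m₀ k' j' l' : ℕ) (hj1 : 1 ≤ j') (hj2 : j' ≤ 2 ^ k') :
    dyadicSet (m₀ + k', 2 ^ k' * l' + j') ⊆
      Set.Ico ((l' : ℝ) / 2 ^ m₀) (((l' : ℝ) + 1) / 2 ^ m₀) := by
  have hM : (0:ℝ) < 2 ^ m₀ := by positivity
  have hA : (0:ℝ) < 2 ^ k' := by positivity
  have hj1' : (1:ℝ) ≤ (j' : ℝ) := by exact_mod_cast hj1
  have hj2' : (j' : ℝ) ≤ 2 ^ k' := by exact_mod_cast hj2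
  apply Set.Ico_subset_Ico
  · dsimp only [dyadicSet]
    push_cast
    rw [pow_add, div_le_div_iff₀ hM (by positivity)]
    nlinarith
  · dsimp only [dyadicSet]
    push_cast
    rw [pow_add, div_le_div_iff₀ (by positivity) hM]
    nlinarith

lemma block_disj (m₀ a b : ℕ) (hab : a ≠ b) :
    Disjoint (Set.Ico ((a : ℝ) / 2 ^ m₀) (((a : ℝ) + 1) / 2 ^ m₀))
      (Set.Ico ((b : ℝ) / 2 ^ m₀) (((b : ℝ) + 1) / 2 ^ m₀)) := by
  have hM : (0:ℝ) < 2 ^ m₀ := by positivity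
  rw [Set.Ico_disjoint_Ico]
  rcases lt_or_gt_of_ne hab with h | h
  · have : (a : ℝ) + 1 ≤ (b : ℝ) := by exact_mod_cast h
    calc min (((a:ℝ)+1)/2^m₀) (((b:ℝ)+1)/2^m₀) ≤ ((a:ℝ)+1)/2^m₀ := min_le_left _ _
    _ ≤ (b:ℝ)/2^m₀ := by gcongr
    _ ≤ max ((a:ℝ)/2^m₀) ((b:ℝ)/2^m₀) := le_max_right _ _
  · have : (b : ℝ) + 1 ≤ (a : ℝ) := by exact_mod_cast h
    calc min (((a:ℝ)+1)/2^m₀) (((b:ℝ)+1)/2^m₀) ≤ ((b:ℝ)+1)/2^m₀ := min_le_right _ _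
    _ ≤ (a:ℝ)/2^m₀ := by gcongr
    _ ≤ max ((a:ℝ)/2^m₀) ((b:ℝ)/2^m₀) := le_max_left _ _

lemma UB_eq (m₀ k j : ℕ) (hj1 : 1 ≤ j) (hj2 : j ≤ 2 ^ k) :
    UB m₀ k j = ⋃ l ∈ Finset.Icc 1 (2 ^ m₀), dyadicSet (m₀ + k, 2 ^ k * (l - 1) + j) := by
  rw [UB, GG_eq m₀ k j hj1 hj2]
  ext x
  simp only [Set.mem_iUnion, Finset.mem_image, exists_prop]
  constructor
  · rintro ⟨K, ⟨l, hl, rfl⟩, hx⟩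
    exact ⟨l, hl, hx⟩
  · rintro ⟨l, hl, hx⟩
    exact ⟨_, ⟨l, hl, rfl⟩, hx⟩

lemma vol_UB (m₀ k j : ℕ) (hj1 : 1 ≤ j) (hj2 : j ≤ 2 ^ k) :
    volume (UB m₀ k j) = ENNReal.ofReal (((2 : ℝ) ^ k)⁻¹) := by
  rw [UB_eq m₀ k j hj1 hj2]
  rw [measure_biUnion_finset]
  · rw [Finset.sum_congr rfl (fun l _ => vol_dyadic (m₀ + k) (2 ^ k * (l - 1) + j)),
      Finset.sum_const, Nat.card_Icc]
    rw [show 2 ^ m₀ + 1 - 1 = 2 ^ m₀ from rfl, nsmul_eq_mul]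
    rw [show ((2 ^ m₀ : ℕ) : ENNReal) = ENNReal.ofReal ((2:ℝ) ^ m₀) by
        simp [ENNReal.ofReal_pow],
      ← ENNReal.ofReal_mul (by positivity)]
    congr 1
    rw [pow_add]
    field_simp
  · intro l₁ h₁ l₂ h₂ hne
    simp only [Finset.coe_Icc, Set.mem_Icc] at h₁ h₂
    obtain ⟨a, rfl⟩ : ∃ a, l₁ = a + 1 := ⟨l₁ - 1, by omega⟩
    obtain ⟨b, rfl⟩ : ∃ b, l₂ = b + 1 := ⟨l₂ - 1, by omega⟩
    simp only [Function.onFun, Nat.add_sub_cancel]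
    exact Set.disjoint_left.mpr fun x hx₁ hx₂ =>
      Set.disjoint_left.mp (block_disj m₀ a b (by omega))
        (block_sub m₀ k j a hj1 hj2 hx₁) (block_sub m₀ k j b hj1 hj2 hx₂)
  · exact fun l _ => measurableSet_Ico

/-- Jones' compatibility condition (C4) with constant `κ = 1` for the Gamlen–Gaudet
collections, with equality: for all dyadic intervals `I₀ ⊆ I` in `D_{≤ n}` and every
`K ∈ B_I`, one has `|K ∩ B_{I₀}|/|K| = |B_{I₀}|/|B_I|`. Here `I = (k, j)` and
`I₀ = (k₀, j₀)`. -/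
theorem GG_jones_C4 (m₀ n : ℕ) (k j k₀ j₀ : ℕ)
    (hk : k ≤ n) (hj1 : 1 ≤ j) (hj2 : j ≤ 2 ^ k)
    (hk₀ : k₀ ≤ n) (hj₀1 : 1 ≤ j₀) (hj₀2 : j₀ ≤ 2 ^ k₀)
    (hsub : dyadicSet (k₀, j₀) ⊆ dyadicSet (k, j))
    (K : ℕ × ℕ) (hK : K ∈ GG m₀ k j) :
    (volume (dyadicSet K ∩ UB m₀ k₀ j₀)).toReal / (volume (dyadicSet K)).toReal
      = (volume (UB m₀ k₀ j₀)).toReal / (volume (UB m₀ k j)).toReal := by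
  -- identify K
  rw [GG_eq m₀ k j hj1 hj2] at hK
  simp only [Finset.mem_image, Finset.mem_Icc] at hK
  obtain ⟨l, ⟨hl1, hl2⟩, rfl⟩ := hK
  obtain ⟨l', rfl⟩ : ∃ l', l = l' + 1 := ⟨l - 1, by omega⟩
  simp only [Nat.add_sub_cancel] at *
  -- positivity facts
  have hM : (0:ℝ) < 2 ^ m₀ := by positivity
  have hA : (0:ℝ) < 2 ^ k := by positivity
  have hB : (0:ℝ) < 2 ^ k₀ := by positivity
  -- extract endpoint inequalities from hsub
  have hne : ((j₀ : ℝ) - 1) / 2 ^ k₀ < (j₀ : ℝ) / 2 ^ k₀ := by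
    apply (div_lt_div_iff_of_pos_right hB).mpr
    linarith
  simp only [dyadicSet] at hsub
  rw [Set.Ico_subset_Ico_iff hne] at hsub
  obtain ⟨h1, h2⟩ := hsub
  have h1' : ((j:ℝ) - 1) * 2 ^ k₀ ≤ ((j₀:ℝ) - 1) * 2 ^ k := by
    rw [div_le_div_iff₀ hA hB] at h1; linarith
  have h2' : (j₀:ℝ) * 2 ^ k ≤ (j:ℝ) * 2 ^ k₀ := by
    rw [div_le_div_iff₀ hB hA] at h2; linarith
  -- the inner piece is contained in K
  have hsub2 : dyadicSet (m₀ + k₀, 2 ^ k₀ * l' + j₀) ⊆ dyadicSet (m₀ + k, 2 ^ k * l' + j) := by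
    apply Set.Ico_subset_Ico
    · dsimp only [dyadicSet]
      push_cast
      rw [pow_add, pow_add, div_le_div_iff₀ (by positivity) (by positivity)]
      nlinarith [hM.le, mul_le_mul_of_nonneg_right h1' hM.le]
    · dsimp only [dyadicSet]
      push_cast
      rw [pow_add, pow_add, div_le_div_iff₀ (by positivity) (by positivity)]
      nlinarith [hM.le, mul_le_mul_of_nonneg_right h2' hM.le]
  -- compute the intersection
  have hinter : dyadicSet (m₀ + k, 2 ^ k * l' + j) ∩ UB m₀ k₀ j₀
      = dyadicSet (m₀ + k₀, 2 ^ k₀ * l' + j₀) := by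
    rw [UB_eq m₀ k₀ j₀ hj₀1 hj₀2]
    apply subset_antisymm
    · rintro x ⟨hx1, hx2⟩
      simp only [Set.mem_iUnion, exists_prop, Finset.mem_Icc] at hx2
      obtain ⟨m, ⟨hm1, hm2⟩, hxm⟩ := hx2
      obtain ⟨m', rfl⟩ : ∃ m', m = m' + 1 := ⟨m - 1, by omega⟩
      simp only [Function.onFun, Nat.add_sub_cancel] at hxm
      rcases eq_or_ne m' l' with rfl | hne'
      · exact hxm
      · exact absurd (block_sub m₀ k₀ j₀ m' hj₀1 hj₀2 hxm)
          (Set.disjoint_left.mp (block_disj m₀ l' m' (Ne.symm hne'))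
            (block_sub m₀ k j l' hj1 hj2 hx1))
    · intro x hx
      refine ⟨hsub2 hx, ?_⟩
      simp only [Set.mem_iUnion, exists_prop, Finset.mem_Icc]
      exact ⟨l' + 1, ⟨by omega, by omega⟩, by simpa using hx⟩
  rw [hinter, vol_dyadic, vol_dyadic, vol_UB m₀ k₀ j₀ hj₀1 hj₀2, vol_UB m₀ k j hj1 hj2]
  rw [ENNReal.toReal_ofReal (by positivity), ENNReal.toReal_ofReal (by positivity),
    ENNReal.toReal_ofReal (by positivity), ENNReal.toReal_ofReal (by positivity)]
  rw [pow_add, pow_add]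
  field_simp
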